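/- Let M > 0 be an integer and γ ∈ (0,1]. The number of s-tuples (a₁,…,a_s) ∈ [M]^s for which there exist distinct nonzero ω, ω' ∈ {0,1}^s with gcd(a·ω, a·ω') ≥ γ^{-1} is at most O_s(γ M^s), where a·ω = Σ_i a_i ω_i. -/

import Mathlib

open scoped BigOperators Classical

/-- Number of `x ∈ [1,M]` with `d ∣ x + c` is at most `M/d + 1`. -/
private lemma resCount' (M d : ℕ) (hd : 0 < d) (c : ℤ) :
    ((Finset.Icc (1:ℤ) (M:ℤ)).filter (fun x => (d:ℤ) ∣ x + c)).card ≤ M / d + 1 := by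
  classical
  have hd' : (0:ℤ) < (d:ℤ) := by exact_mod_cast hd
  have hstep : ((Finset.Icc (1:ℤ) (M:ℤ)).filter (fun x => (d:ℤ) ∣ x + c)).card
      ≤ (Finset.Icc (c / (d:ℤ) + 1) (((M:ℤ) + c) / (d:ℤ))).card := by
    apply Finset.card_le_card_of_injOn (fun x => (x + c) / (d:ℤ))
    · intro x hx
      simp only [Finset.coe_filter, Finset.mem_coe, Finset.mem_filter, Finset.mem_Icc, Set.mem_setOf_eq] at hx
      obtain ⟨⟨hx1, hx2⟩, hdvd⟩ := hx
      have hmul : ((x + c) / (d:ℤ)) * (d:ℤ) = x + c := Int.ediv_mul_cancel hdvd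
      simp only [Finset.mem_coe, Finset.mem_Icc]
      constructor
      · refine Int.add_one_le_iff.mpr ?_
        rw [Int.ediv_lt_iff_lt_mul hd', hmul]
        linarith
      · rw [Int.le_ediv_iff_mul_le hd', hmul]
        linarith
    · intro x hx y hy hxy
      simp only [Finset.coe_filter, Set.mem_setOf_eq, Finset.mem_Icc] at hx hy
      have hx' : ((x + c) / (d:ℤ)) * (d:ℤ) = x + c := Int.ediv_mul_cancel hx.2
      have hy' : ((y + c) / (d:ℤ)) * (d:ℤ) = y + c := Int.ediv_mul_cancel hy.2
      simp only at hxy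
      have : x + c = y + c := by rw [← hx', ← hy', hxy]
      linarith
  refine hstep.trans ?_
  rw [Int.card_Icc]
  rw [Int.toNat_le]
  have hcast : ((M / d + 1 : ℕ) : ℤ) = (M:ℤ) / (d:ℤ) + 1 := by
    push_cast [Int.natCast_div]
    ring
  rw [hcast]
  have key : ((M:ℤ) + c) / (d:ℤ) < (M:ℤ)/(d:ℤ) + c/(d:ℤ) + 2 := by
    rw [Int.ediv_lt_iff_lt_mul hd']
    have h1 := Int.mul_ediv_add_emod (M:ℤ) (d:ℤ)
    have h2 := Int.mul_ediv_add_emod c (d:ℤ)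
    have h3 := Int.emod_lt_of_pos (M:ℤ) hd'
    have h4 := Int.emod_lt_of_pos c hd'
    have h5 := Int.emod_nonneg (M:ℤ) (ne_of_gt hd')
    have h6 := Int.emod_nonneg c (ne_of_gt hd')
    have expand : ((M:ℤ)/(d:ℤ) + c/(d:ℤ) + 2) * (d:ℤ)
        = (d:ℤ) * ((M:ℤ)/(d:ℤ)) + (d:ℤ) * (c/(d:ℤ)) + 2*(d:ℤ) := by ring
    rw [expand]
    linarith
  linarith


private lemma sumInvSq' (D : ℕ) (hD : 1 ≤ D) (N : ℕ) :
    ∑ d ∈ Finset.Icc D N, (1:ℝ)/(d:ℝ)^2 ≤ 2/(D:ℝ) := by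
  have hD' : (0:ℝ) < (D:ℝ) := by exact_mod_cast hD
  have main : ∀ n : ℕ, D ≤ n → ∑ d ∈ Finset.Icc D n, (1:ℝ)/(d:ℝ)^2 ≤ 2/(D:ℝ) - 1/(n:ℝ) := by
    refine Nat.le_induction ?_ ?_
    · rw [Finset.Icc_self, Finset.sum_singleton]
      have hD1 : (1:ℝ) ≤ (D:ℝ) := by exact_mod_cast hD
      have h1 : (1:ℝ)/(D:ℝ)^2 ≤ 1/(D:ℝ) := by
        apply one_div_le_one_div_of_le hD'
        nlinarith
      have h2 : (2:ℝ)/(D:ℝ) - 1/(D:ℝ) = 1/(D:ℝ) := by ring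
      linarith
    · intro n hn ih
      rw [Finset.sum_Icc_succ_top (by omega)]
      have hn' : (1:ℝ) ≤ (n:ℝ) := by exact_mod_cast hD.trans hn
      have hnp : (0:ℝ) < (n:ℝ) := by linarith
      have e : (1:ℝ)/(n:ℝ) - 1/((n:ℝ)+1) = 1/((n:ℝ)*((n:ℝ)+1)) := by
        field_simp
        ring
      have h2 : (1:ℝ)/((n:ℝ)+1)^2 ≤ 1/((n:ℝ)*((n:ℝ)+1)) := by
        apply one_div_le_one_div_of_le (by positivity)
        nlinarith
      push_cast
      linarith
  by_cases h : D ≤ N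
  · have h1 := main N h
    have hN' : (0:ℝ) < (N:ℝ) := by
      have : 1 ≤ N := hD.trans h
      exact_mod_cast this
    have : (0:ℝ) < 1/(N:ℝ) := by positivity
    linarith
  · rw [Finset.Icc_eq_empty (by omega), Finset.sum_empty]
    positivity

private lemma keyCount' (s M d : ℕ) (hd : 0 < d) (ω ω' : Fin s → Bool)
    (i j : Fin s) (hij : i ≠ j) (hωi : ω i = true) (hω'i : ω' i = false) (hω'j : ω' j = true) :
    ((Fintype.piFinset (fun _ : Fin s => Finset.Icc (1 : ℤ) (M : ℤ))).filter
      (fun a : Fin s → ℤ => ((d:ℤ) ∣ ∑ k, if ω k then a k else 0)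
        ∧ ((d:ℤ) ∣ ∑ k, if ω' k then a k else 0))).card
      ≤ (M / d + 1)^2 * M^(s-2) := by
  classical
  set B := Fintype.piFinset (fun _ : Fin s => Finset.Icc (1 : ℤ) (M : ℤ)) with hB
  set S := B.filter (fun a : Fin s → ℤ => ((d:ℤ) ∣ ∑ k, if ω k then a k else 0)
      ∧ ((d:ℤ) ∣ ∑ k, if ω' k then a k else 0)) with hS
  set f : (Fin s → ℤ) → (Fin s → ℤ) := fun a k => if k = i ∨ k = j then 1 else a k with hf
  -- fiber bound
  have hfib : ∀ b ∈ S.image f, (S.filter (fun a => f a = b)).card ≤ (M/d+1)^2 := by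
    intro b hb
    set F := S.filter (fun a => f a = b) with hF
    have hevalF : ∀ a ∈ F, ∀ k, k ≠ i → k ≠ j → a k = b k := by
      intro a ha k hki hkj
      rw [hF, Finset.mem_filter] at ha
      have h : f a k = b k := by rw [ha.2]
      simpa [hf, hki, hkj] using h
    have hmemF : ∀ a ∈ F, a ∈ B ∧ ((d:ℤ) ∣ ∑ k, if ω k then a k else 0)
        ∧ ((d:ℤ) ∣ ∑ k, if ω' k then a k else 0) := by
      intro a ha
      rw [hF, Finset.mem_filter, hS, Finset.mem_filter] at ha
      exact ⟨ha.1.1, ha.1.2⟩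
    set c1 : ℤ := ∑ k ∈ (({i, j} : Finset (Fin s)))ᶜ, (if ω' k then b k else 0) with hc1
    -- sum decomposition for ω'
    have hsum' : ∀ a ∈ F, (∑ k, if ω' k then a k else 0) = a j + c1 := by
      intro a ha
      rw [← Finset.sum_add_sum_compl ({i,j} : Finset (Fin s)) (fun k => if ω' k then a k else 0),
        Finset.sum_pair hij, hω'i, hω'j]
      have hcong : ∑ k ∈ (({i,j} : Finset (Fin s)))ᶜ, (if ω' k then a k else 0)
          = ∑ k ∈ (({i,j} : Finset (Fin s)))ᶜ, (if ω' k then b k else 0) := by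
        apply Finset.sum_congr rfl
        intro k hk
        rw [Finset.mem_compl, Finset.mem_insert, Finset.mem_singleton] at hk
        push_neg at hk
        rw [hevalF a ha k hk.1 hk.2]
      rw [hcong, hc1]
      simp
    have himg2 : F.image (fun a => a j) ⊆ (Finset.Icc (1:ℤ) (M:ℤ)).filter (fun x => (d:ℤ) ∣ x + c1) := by
      intro y hy
      rw [Finset.mem_image] at hy
      obtain ⟨a, ha, rfl⟩ := hy
      obtain ⟨haB, hdv1, hdv2⟩ := hmemF a ha
      rw [Finset.mem_filter]
      refine ⟨Fintype.mem_piFinset.mp haB j, ?_⟩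
      rw [← hsum' a ha]
      exact hdv2
    have hfib2 : ∀ y ∈ F.image (fun a => a j), (F.filter (fun a => a j = y)).card ≤ M/d+1 := by
      intro y hy
      set c2 : ℤ := (if ω j then y else 0)
          + ∑ k ∈ (({i,j} : Finset (Fin s)))ᶜ, (if ω k then b k else 0) with hc2
      have hstep : (F.filter (fun a => a j = y)).card
          ≤ ((Finset.Icc (1:ℤ) (M:ℤ)).filter (fun x => (d:ℤ) ∣ x + c2)).card := by
        apply Finset.card_le_card_of_injOn (fun a => a i)
        · intro a ha
          rw [Finset.mem_coe, Finset.mem_filter] at ha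
          obtain ⟨haF, haj⟩ := ha
          obtain ⟨haB, hdv1, hdv2⟩ := hmemF a haF
          have hsum : (∑ k, if ω k then a k else 0) = a i + c2 := by
            rw [← Finset.sum_add_sum_compl ({i,j} : Finset (Fin s)) (fun k => if ω k then a k else 0),
              Finset.sum_pair hij, hωi]
            have hcong : ∑ k ∈ (({i,j} : Finset (Fin s)))ᶜ, (if ω k then a k else 0)
                = ∑ k ∈ (({i,j} : Finset (Fin s)))ᶜ, (if ω k then b k else 0) := by
              apply Finset.sum_congr rfl
              intro k hk
              rw [Finset.mem_compl, Finset.mem_insert, Finset.mem_singleton] at hk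
              push_neg at hk
              rw [hevalF a haF k hk.1 hk.2]
            rw [hcong, hc2, haj]
            simp [add_assoc]
          rw [Finset.mem_coe, Finset.mem_filter]
          refine ⟨Fintype.mem_piFinset.mp haB i, ?_⟩
          rw [← hsum]
          exact hdv1
        · intro a ha a' ha' hii
          simp only [Finset.coe_filter, Set.mem_setOf_eq] at ha ha'
          funext k
          by_cases hk1 : k = i
          · rw [hk1]; exact hii
          by_cases hk2 : k = j
          · rw [hk2, ha.2, ha'.2]
          · rw [hevalF a ha.1 k hk1 hk2, hevalF a' ha'.1 k hk1 hk2]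
      exact hstep.trans (resCount' M d hd c2)
    have h2 : F.card ≤ (M/d+1) * (F.image (fun a => a j)).card :=
      Finset.card_le_mul_card_image _ _ hfib2
    have h3 : (F.image (fun a => a j)).card ≤ M/d+1 :=
      (Finset.card_le_card himg2).trans (resCount' M d hd c1)
    calc F.card ≤ (M/d+1) * (F.image (fun a => a j)).card := h2
      _ ≤ (M/d+1) * (M/d+1) := Nat.mul_le_mul_left _ h3
      _ = (M/d+1)^2 := (sq _).symm
  have h1 : S.card ≤ (M/d+1)^2 * (S.image f).card := Finset.card_le_mul_card_image _ _ hfib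
  have himg : (S.image f).card ≤ M^(s-2) := by
    have hsub : S.image f ⊆ Fintype.piFinset
        (fun k => if k = i ∨ k = j then ({1} : Finset ℤ) else Finset.Icc (1:ℤ) (M:ℤ)) := by
      intro b hb
      rw [Finset.mem_image] at hb
      obtain ⟨a, ha, rfl⟩ := hb
      have haB : a ∈ B := (Finset.mem_filter.mp ha).1
      rw [Fintype.mem_piFinset]
      intro k
      by_cases hk : k = i ∨ k = j
      · simp [hf, hk]
      · simp only [hf, hk, if_neg, if_false]
        simpa [hk] using Fintype.mem_piFinset.mp haB k
    refine (Finset.card_le_card hsub).trans ?_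
    rw [Fintype.card_piFinset]
    have hval : ∀ k : Fin s, (if k = i ∨ k = j then ({1} : Finset ℤ)
        else Finset.Icc (1:ℤ) (M:ℤ)).card = if k = i ∨ k = j then 1 else M := by
      intro k
      by_cases hk : k = i ∨ k = j
      · simp [hk]
      · simp only [hk, if_false]
        rw [Int.card_Icc]
        omega
    rw [Finset.prod_congr rfl (fun k _ => hval k)]
    rw [← Finset.prod_mul_prod_compl ({i,j} : Finset (Fin s))]
    have hp1 : ∏ k ∈ ({i,j} : Finset (Fin s)), (if k = i ∨ k = j then 1 else M) = 1 := by
      rw [Finset.prod_pair hij]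
      simp
    have hp2 : ∏ k ∈ (({i,j} : Finset (Fin s)))ᶜ, (if k = i ∨ k = j then 1 else M) = M^(s-2) := by
      rw [Finset.prod_congr rfl (fun k hk => ?_), Finset.prod_const]
      · congr 1
        rw [Finset.card_compl, Finset.card_pair hij, Fintype.card_fin]
      · rw [Finset.mem_compl, Finset.mem_insert, Finset.mem_singleton] at hk
        push_neg at hk
        simp [hk.1, hk.2]
    rw [hp1, hp2, one_mul]
  calc S.card ≤ (M/d+1)^2 * (S.image f).card := h1
    _ ≤ (M/d+1)^2 * M^(s-2) := Nat.mul_le_mul_left _ himg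

/-- For all but an `O_s(γ)`-proportion of `s`-tuples `(a₁,…,a_s) ∈ [M]^s`, all the
pairwise gcds `gcd(a·ω, a·ω')` over distinct nonzero `ω, ω' ∈ {0,1}^s` are `< γ⁻¹`. -/
theorem stmt7 (s : ℕ) :
    ∃ C : ℝ, 0 < C ∧ ∀ (M : ℕ) (γ : ℝ), 0 < M → 0 < γ → γ ≤ 1 →
      (((Fintype.piFinset (fun _ : Fin s => Finset.Icc (1 : ℤ) (M : ℤ))).filter
          (fun a : Fin s → ℤ => ∃ ω ω' : Fin s → Bool,
            ω ≠ ω' ∧ ω ≠ (fun _ => false) ∧ ω' ≠ (fun _ => false) ∧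
            γ⁻¹ ≤ (Int.gcd (∑ i, if ω i then a i else 0)
                (∑ i, if ω' i then a i else 0) : ℝ))).card : ℝ)
        ≤ C * γ * (M : ℝ) ^ s := by
  classical
  refine ⟨8 * (s:ℝ)^2 * 4^s + 1, by positivity, ?_⟩
  intro M γ hM hγ hγ1
  set B := Fintype.piFinset (fun _ : Fin s => Finset.Icc (1 : ℤ) (M : ℤ)) with hB
  set D := ⌈γ⁻¹⌉₊ with hD
  have hD1 : 1 ≤ D := by
    rw [hD]
    exact Nat.one_le_ceil_iff.mpr (by positivity)
  set N := s * M with hN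
  set Sf : (Fin s → Bool) → (Fin s → Bool) → ℕ → Finset (Fin s → ℤ) := fun ω ω' d =>
    B.filter (fun a : Fin s → ℤ => ((d:ℤ) ∣ ∑ k, if ω k then a k else 0)
      ∧ ((d:ℤ) ∣ ∑ k, if ω' k then a k else 0)) with hSf
  set P : Finset ((Fin s → Bool) × (Fin s → Bool)) :=
    Finset.univ.filter (fun p => p.1 ≠ p.2 ∧ p.1 ≠ (fun _ => false) ∧ p.2 ≠ (fun _ => false))
    with hP
  -- subset claim
  have hsub : (B.filter (fun a : Fin s → ℤ => ∃ ω ω' : Fin s → Bool,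
        ω ≠ ω' ∧ ω ≠ (fun _ => false) ∧ ω' ≠ (fun _ => false) ∧
        γ⁻¹ ≤ (Int.gcd (∑ i, if ω i then a i else 0)
            (∑ i, if ω' i then a i else 0) : ℝ)))
      ⊆ P.biUnion (fun p => (Finset.Icc D N).biUnion (fun d => Sf p.1 p.2 d)) := by
    intro a ha
    rw [Finset.mem_filter] at ha
    obtain ⟨haB, ω, ω', hne, h1, h2, hge⟩ := ha
    set g := Int.gcd (∑ k, if ω k then a k else 0) (∑ k, if ω' k then a k else 0) with hg
    have haI : ∀ k, 1 ≤ a k ∧ a k ≤ (M:ℤ) := by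
      intro k
      have := Fintype.mem_piFinset.mp haB k
      rwa [Finset.mem_Icc] at this
    obtain ⟨jj, hjj⟩ : ∃ jj, ω' jj = true := by
      by_contra hcon
      push_neg at hcon
      exact h2 (funext fun k => by simpa using hcon k)
    have hpos : 0 < ∑ k, if ω' k then a k else 0 := by
      have hnn : ∀ k ∈ Finset.univ, (0:ℤ) ≤ if ω' k then a k else 0 := by
        intro k _
        split
        · linarith [(haI k).1]
        · exact le_rfl
      calc (0:ℤ) < a jj := by linarith [(haI jj).1]
        _ = (if ω' jj then a jj else 0) := by simp [hjj]
        _ ≤ _ := Finset.single_le_sum hnn (Finset.mem_univ jj)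
    have hgle : (g:ℤ) ≤ ∑ k, if ω' k then a k else 0 := Int.le_of_dvd hpos (Int.gcd_dvd_right _ _)
    have hsumle : (∑ k, if ω' k then a k else 0) ≤ (N:ℤ) := by
      calc (∑ k, if ω' k then a k else 0) ≤ ∑ _k : Fin s, (M:ℤ) := by
            apply Finset.sum_le_sum
            intro k _
            split
            · exact (haI k).2
            · positivity
        _ = (N:ℤ) := by
            rw [Finset.sum_const, Finset.card_univ, Fintype.card_fin, hN]
            push_cast
            ring
    rw [Finset.mem_biUnion]
    refine ⟨(ω, ω'), ?_, ?_⟩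
    · rw [hP, Finset.mem_filter]
      exact ⟨Finset.mem_univ _, hne, h1, h2⟩
    rw [Finset.mem_biUnion]
    refine ⟨g, ?_, ?_⟩
    · rw [Finset.mem_Icc]
      constructor
      · rw [hD]
        exact Nat.ceil_le.mpr hge
      · exact_mod_cast hgle.trans hsumle
    · rw [hSf]
      rw [Finset.mem_filter]
      exact ⟨haB, Int.gcd_dvd_left _ _, Int.gcd_dvd_right _ _⟩
  -- per-pair counting using keyCount'
  have hkey : ∀ p : (Fin s → Bool) × (Fin s → Bool), p ∈ P →
      2 ≤ s ∧ ∀ d : ℕ, 0 < d → (Sf p.1 p.2 d).card ≤ (M/d+1)^2 * M^(s-2) := by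
    rintro ⟨ω, ω'⟩ hp
    rw [hP, Finset.mem_filter] at hp
    obtain ⟨-, hne, h1, h2⟩ := hp
    obtain ⟨i, hi⟩ := Function.ne_iff.mp hne
    obtain ⟨j1, hj1⟩ : ∃ k, ω k = true := by
      by_contra hcon
      push_neg at hcon
      exact h1 (funext fun k => by simpa using hcon k)
    obtain ⟨j2, hj2⟩ : ∃ k, ω' k = true := by
      by_contra hcon
      push_neg at hcon
      exact h2 (funext fun k => by simpa using hcon k)
    have htwo : ∀ u v : Fin s, u ≠ v → 2 ≤ s := by
      intro u v huv
      calc 2 = ({u, v} : Finset (Fin s)).card := (Finset.card_pair huv).symm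
        _ ≤ Fintype.card (Fin s) := Finset.card_le_univ _
        _ = s := Fintype.card_fin s
    simp only at hi
    cases hωi : ω i <;> cases hω'i : ω' i
    · exact absurd (hωi.trans hω'i.symm) hi
    · -- ω i = false, ω' i = true : use keyCount' with roles swapped
      have hij : i ≠ j1 := by
        intro h
        rw [h, hj1] at hωi
        exact Bool.noConfusion hωi
      refine ⟨htwo i j1 hij, ?_⟩
      intro d hd
      have heq : Sf ω ω' d = Sf ω' ω d := by
        rw [hSf]
        apply Finset.filter_congr
        intro a _
        exact and_comm
      rw [heq, hSf]
      exact keyCount' s M d hd ω' ω i j1 hij hω'i hωi hj1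
    · -- ω i = true, ω' i = false : direct
      have hij : i ≠ j2 := by
        intro h
        rw [h, hj2] at hω'i
        exact Bool.noConfusion hω'i
      refine ⟨htwo i j2 hij, ?_⟩
      intro d hd
      rw [hSf]
      exact keyCount' s M d hd ω ω' i j2 hij hωi hω'i hj2
    · exact absurd (hωi.trans hω'i.symm) hi
  -- nat-level bound
  have h1 : (B.filter (fun a : Fin s → ℤ => ∃ ω ω' : Fin s → Bool,
        ω ≠ ω' ∧ ω ≠ (fun _ => false) ∧ ω' ≠ (fun _ => false) ∧
        γ⁻¹ ≤ (Int.gcd (∑ i, if ω i then a i else 0)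
            (∑ i, if ω' i then a i else 0) : ℝ))).card
      ≤ ∑ p ∈ P, ∑ d ∈ Finset.Icc D N, (Sf p.1 p.2 d).card := by
    refine (Finset.card_le_card hsub).trans ?_
    refine Finset.card_biUnion_le.trans ?_
    exact Finset.sum_le_sum fun p _ => Finset.card_biUnion_le
  -- real estimates
  have hDpos : (0:ℝ) < (D:ℝ) := by exact_mod_cast hD1
  have hDγ : 1/(D:ℝ) ≤ γ := by
    have hle : γ⁻¹ ≤ (D:ℝ) := Nat.le_ceil _
    calc 1/(D:ℝ) ≤ 1/γ⁻¹ := one_div_le_one_div_of_le (by positivity) hle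
      _ = γ := by rw [one_div, inv_inv]
  have hMpos : (0:ℝ) < (M:ℝ) := by exact_mod_cast hM
  have hinner : ∀ p ∈ P, (∑ d ∈ Finset.Icc D N, ((Sf p.1 p.2 d).card : ℝ))
      ≤ 8 * (s:ℝ)^2 * γ * (M:ℝ)^s := by
    intro p hp
    obtain ⟨hs2, hbound⟩ := hkey p hp
    have hs2' : (2:ℝ) ≤ (s:ℝ) := by exact_mod_cast hs2
    have h2s : 2 + (s - 2) = s := Nat.add_sub_cancel' hs2
    have hpow : (M:ℝ)^2 * (M:ℝ)^(s-2) = (M:ℝ)^s := by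
      rw [← pow_add, h2s]
    have step1 : ∀ d ∈ Finset.Icc D N, ((Sf p.1 p.2 d).card : ℝ)
        ≤ 4 * (s:ℝ)^2 * (M:ℝ)^s * (1/(d:ℝ)^2) := by
      intro d hdm
      rw [Finset.mem_Icc] at hdm
      have hd0 : 0 < d := lt_of_lt_of_le hD1 hdm.1
      have hd0' : (0:ℝ) < (d:ℝ) := by exact_mod_cast hd0
      have hb := hbound d hd0
      have hcast : ((Sf p.1 p.2 d).card : ℝ) ≤ (((M/d : ℕ):ℝ)+1)^2 * (M:ℝ)^(s-2) := by
        calc ((Sf p.1 p.2 d).card : ℝ) ≤ (((M/d+1)^2 * M^(s-2) : ℕ) : ℝ) := by exact_mod_cast hb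
          _ = (((M/d : ℕ):ℝ)+1)^2 * (M:ℝ)^(s-2) := by push_cast; ring
      have hdN : (d:ℝ) ≤ (s:ℝ) * (M:ℝ) := by
        have : (d:ℝ) ≤ (N:ℝ) := by exact_mod_cast hdm.2
        rw [hN] at this
        push_cast at this
        linarith
      have hMd : ((M/d : ℕ):ℝ) + 1 ≤ 2 * (s:ℝ) * (M:ℝ) / (d:ℝ) := by
        have ha : ((M/d : ℕ):ℝ) ≤ (M:ℝ)/(d:ℝ) := Nat.cast_div_le
        have hb2 : (M:ℝ)/(d:ℝ) ≤ (s:ℝ)*(M:ℝ)/(d:ℝ) := by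
          gcongr
          nlinarith
        have hc : (1:ℝ) ≤ (s:ℝ)*(M:ℝ)/(d:ℝ) := by
          rw [le_div_iff₀ hd0']
          linarith
        have he : 2 * (s:ℝ) * (M:ℝ) / (d:ℝ) = (s:ℝ)*(M:ℝ)/(d:ℝ) + (s:ℝ)*(M:ℝ)/(d:ℝ) := by
          ring
        linarith
      have hsq : (((M/d : ℕ):ℝ)+1)^2 * (M:ℝ)^(s-2)
          ≤ (2 * (s:ℝ) * (M:ℝ) / (d:ℝ))^2 * (M:ℝ)^(s-2) := by
        apply mul_le_mul_of_nonneg_right _ (by positivity)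
        apply pow_le_pow_left₀ (by positivity) hMd
      have hfin : (2 * (s:ℝ) * (M:ℝ) / (d:ℝ))^2 * (M:ℝ)^(s-2)
          = 4 * (s:ℝ)^2 * (M:ℝ)^s * (1/(d:ℝ)^2) := by
        rw [← hpow]
        field_simp
        ring
      calc ((Sf p.1 p.2 d).card : ℝ) ≤ (((M/d : ℕ):ℝ)+1)^2 * (M:ℝ)^(s-2) := hcast
        _ ≤ (2 * (s:ℝ) * (M:ℝ) / (d:ℝ))^2 * (M:ℝ)^(s-2) := hsq
        _ = 4 * (s:ℝ)^2 * (M:ℝ)^s * (1/(d:ℝ)^2) := hfin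
    calc (∑ d ∈ Finset.Icc D N, ((Sf p.1 p.2 d).card : ℝ))
        ≤ ∑ d ∈ Finset.Icc D N, 4 * (s:ℝ)^2 * (M:ℝ)^s * (1/(d:ℝ)^2) :=
          Finset.sum_le_sum step1
      _ = 4 * (s:ℝ)^2 * (M:ℝ)^s * ∑ d ∈ Finset.Icc D N, (1:ℝ)/(d:ℝ)^2 := by
          rw [Finset.mul_sum]
      _ ≤ 4 * (s:ℝ)^2 * (M:ℝ)^s * (2/(D:ℝ)) := by
          apply mul_le_mul_of_nonneg_left (sumInvSq' D hD1 N) (by positivity)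
      _ = 8 * (s:ℝ)^2 * (M:ℝ)^s * (1/(D:ℝ)) := by ring
      _ ≤ 8 * (s:ℝ)^2 * (M:ℝ)^s * γ := by
          apply mul_le_mul_of_nonneg_left hDγ (by positivity)
      _ = 8 * (s:ℝ)^2 * γ * (M:ℝ)^s := by ring
  -- final assembly
  have hPcard : (P.card : ℝ) ≤ (4:ℝ)^s := by
    have h4 : P.card ≤ 4^s := by
      calc P.card ≤ Fintype.card ((Fin s → Bool) × (Fin s → Bool)) :=
            (Finset.card_le_univ P).trans_eq Finset.card_univ
        _ = 4^s := by
            simp only [Fintype.card_prod, Fintype.card_fun, Fintype.card_fin, Fintype.card_bool,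
              ← mul_pow]
            norm_num
    calc (P.card : ℝ) ≤ ((4^s : ℕ) : ℝ) := by exact_mod_cast h4
      _ = (4:ℝ)^s := by push_cast; ring
  have hγM : (0:ℝ) ≤ γ * (M:ℝ)^s := by positivity
  calc ((B.filter (fun a : Fin s → ℤ => ∃ ω ω' : Fin s → Bool,
        ω ≠ ω' ∧ ω ≠ (fun _ => false) ∧ ω' ≠ (fun _ => false) ∧
        γ⁻¹ ≤ (Int.gcd (∑ i, if ω i then a i else 0)
            (∑ i, if ω' i then a i else 0) : ℝ))).card : ℝ)
      ≤ ∑ p ∈ P, ∑ d ∈ Finset.Icc D N, ((Sf p.1 p.2 d).card : ℝ) := by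
        exact_mod_cast h1
    _ ≤ ∑ _p ∈ P, 8 * (s:ℝ)^2 * γ * (M:ℝ)^s := Finset.sum_le_sum hinner
    _ = (P.card : ℝ) * (8 * (s:ℝ)^2 * γ * (M:ℝ)^s) := by
        rw [Finset.sum_const, nsmul_eq_mul]
    _ ≤ (4:ℝ)^s * (8 * (s:ℝ)^2 * γ * (M:ℝ)^s) := by
        apply mul_le_mul_of_nonneg_right hPcard (by positivity)
    _ = (8 * (s:ℝ)^2 * 4^s) * γ * (M:ℝ)^s := by ring
    _ ≤ (8 * (s:ℝ)^2 * 4^s + 1) * γ * (M:ℝ)^s := by nlinarith [hγM]
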